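/- Let ξ₁,…,ξ_n be distinct points on the unit circle 𝕋, m₁,…,m_n positive integers, p(z) = ∏_{k=1}^n (z−ξ_k)^{m_k}, and let W : [−π,π] → [0,∞) be Lebesgue integrable. Define, for z in the open unit disk 𝔻, F(z) = 2p(z)·∫_{−π}^{π} (e^{it}/(e^{it}−z))·(|p(e^{it})|/p(e^{it}))·W(t) dt/(2π) and F₀(z) = ∫_{−π}^{π} ((e^{it}+z)/(e^{it}−z))·|p(e^{it})|·W(t) dt/(2π). Then both integrals converge for every z ∈ 𝔻, and there exists a complex polynomial q such that F(z) = F₀(z) + q(z) for all z ∈ 𝔻. -/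

import Mathlib

open MeasureTheory Real Set Filter

noncomputable section

/-- The open unit disk in `ℂ`. -/
def unitDisk : Set ℂ := Metric.ball 0 1

/-- The point `e^{it}` on the unit circle. -/
def circ (t : ℝ) : ℂ := Complex.exp (t * Complex.I)

/-- Membership in the Hardy space `H²` of the unit disk:
`f` is analytic on `𝔻` and `sup_{0<r<1} ∫_𝕋 |f(rξ)|² dm(ξ) < ∞`. -/
def MemH2 (f : ℂ → ℂ) : Prop :=
  DifferentiableOn ℂ f unitDisk ∧
  ∃ C : ℝ, ∀ r : ℝ, 0 < r → r < 1 →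
    (∫ t in (-π)..π, ‖f (r * circ t)‖ ^ 2) / (2 * π) ≤ C

/-- The square of the `H²` norm, as a supremum over radii `0 < r < 1`. -/
def H2normSq (f : ℂ → ℂ) : ℝ :=
  ⨆ r : Set.Ioo (0:ℝ) 1, (∫ t in (-π)..π, ‖f ((r : ℝ) * circ t)‖ ^ 2) / (2 * π)

/-- `f` is an outer function on the unit disk: `f = exp(∫_𝕋 (ξ+z)/(ξ-z) g(ξ) dm(ξ))`
for some real-valued integrable `g` on `𝕋`. -/
def IsOuter (f : ℂ → ℂ) : Prop :=
  ∃ g : ℝ → ℝ, IntervalIntegrable g volume (-π) π ∧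
    ∀ z ∈ unitDisk, f z =
      Complex.exp ((∫ t in (-π)..π, ((circ t + z) / (circ t - z)) * (g t : ℂ)) / (2 * (π : ℂ)))

/-- `f` is bounded on the unit disk. -/
def BoundedOnDisk (f : ℂ → ℂ) : Prop :=
  ∃ M : ℝ, ∀ z ∈ unitDisk, ‖f z‖ ≤ M

/-- Membership in `M(ā₁) = a₁ H² + P_{N-1}`. -/
def MemMa (a₁ : ℂ → ℂ) (N : ℕ) (f : ℂ → ℂ) : Prop :=
  ∃ g : ℂ → ℂ, MemH2 g ∧ ∃ q : Polynomial ℂ, q.degree < (N : WithBot ℕ) ∧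
    ∀ z ∈ unitDisk, f z = a₁ z * g z + q.eval z

section CTDAux
open Finset Polynomial

def qc (P : Polynomial ℂ) (r : ℕ) (w : ℂ) : ℂ :=
  ∑ i ∈ Finset.range (P.natDegree + 1), P.coeff i * (if r < i then w ^ (i - 1 - r) else 0)

def Qp (P : Polynomial ℂ) (w : ℂ) : Polynomial ℂ :=
  ∑ i ∈ Finset.range (P.natDegree + 1),
    Polynomial.C (P.coeff i) * ∑ j ∈ Finset.range i, Polynomial.C (w ^ (i - 1 - j)) * Polynomial.X ^ j

def Dp (P : Polynomial ℂ) (w : ℂ) : Polynomial ℂ := P - (Polynomial.C w + Polynomial.X) * Qp P w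

lemma Qp_key (P : Polynomial ℂ) (z w : ℂ) : (z - w) * (Qp P w).eval z = P.eval z - P.eval w := by
  simp only [Qp, eval_finset_sum, eval_mul, eval_C, eval_pow, eval_X]
  rw [Finset.mul_sum]
  have : ∀ i ∈ Finset.range (P.natDegree + 1),
      (z - w) * (P.coeff i * ∑ j ∈ Finset.range i, w ^ (i - 1 - j) * z ^ j)
        = P.coeff i * z ^ i - P.coeff i * w ^ i := by
    intro i _
    have h := geom_sum₂_mul z w i
    have : (∑ j ∈ Finset.range i, w ^ (i - 1 - j) * z ^ j) = ∑ j ∈ Finset.range i, z ^ j * w ^ (i - 1 - j) := by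
      exact Finset.sum_congr rfl (fun j _ => mul_comm _ _)
    rw [this]
    linear_combination P.coeff i * h
  rw [Finset.sum_congr rfl this, Finset.sum_sub_distrib]
  rw [← Polynomial.eval_eq_sum_range, ← Polynomial.eval_eq_sum_range]

lemma Qp_coeff (P : Polynomial ℂ) (r : ℕ) (w : ℂ) : (Qp P w).coeff r = qc P r w := by
  simp only [Qp, qc, Polynomial.finset_sum_coeff, Polynomial.coeff_C_mul, Polynomial.coeff_X_pow,
    mul_ite, mul_one, mul_zero, Finset.sum_ite_eq, Finset.mem_range]

lemma Dp_coeff (P : Polynomial ℂ) (r : ℕ) (w : ℂ) :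
    (Dp P w).coeff r = P.coeff r - (w * qc P r w + (if r = 0 then 0 else qc P (r - 1) w)) := by
  simp only [Dp, Polynomial.coeff_sub, add_mul, Polynomial.coeff_add, Polynomial.coeff_C_mul,
    Qp_coeff]
  congr 1
  congr 1
  cases r with
  | zero => simp [Polynomial.mul_coeff_zero]
  | succ n => simp [Polynomial.coeff_X_mul, Qp_coeff]

lemma Dp_natDegree_lt (P : Polynomial ℂ) (w : ℂ) : (Dp P w).natDegree < P.natDegree + 2 := by
  have hQ : (Qp P w).natDegree ≤ P.natDegree := by
    apply Polynomial.natDegree_sum_le_of_forall_le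
    intro i hi
    refine (Polynomial.natDegree_C_mul_le _ _).trans ?_
    apply Polynomial.natDegree_sum_le_of_forall_le
    intro j hj
    refine (Polynomial.natDegree_C_mul_le _ _).trans ?_
    rw [Polynomial.natDegree_X_pow]
    simp only [Finset.mem_range] at hi hj
    omega
  have h2 : ((Polynomial.C w + Polynomial.X) * Qp P w).natDegree ≤ P.natDegree + 1 := by
    refine (Polynomial.natDegree_mul_le).trans ?_
    have : (Polynomial.C w + Polynomial.X).natDegree ≤ 1 := by
      refine (Polynomial.natDegree_add_le _ _).trans ?_
      simp [Polynomial.natDegree_X]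
    omega
  have := Polynomial.natDegree_sub_le P ((Polynomial.C w + Polynomial.X) * Qp P w)
  simp only [Dp]
  omega

lemma qc_norm_le (P : Polynomial ℂ) (r : ℕ) (w : ℂ) (hw : ‖w‖ = 1) :
    ‖qc P r w‖ ≤ ∑ i ∈ Finset.range (P.natDegree + 1), ‖P.coeff i‖ := by
  refine (norm_sum_le _ _).trans (Finset.sum_le_sum fun i _ => ?_)
  rw [norm_mul]
  split_ifs with h
  · rw [norm_pow, hw, one_pow, mul_one]
  · simp

lemma Dp_coeff_norm_le (P : Polynomial ℂ) (r : ℕ) (w : ℂ) (hw : ‖w‖ = 1) :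
    ‖(Dp P w).coeff r‖ ≤ ‖P.coeff r‖ + 2 * ∑ i ∈ Finset.range (P.natDegree + 1), ‖P.coeff i‖ := by
  rw [Dp_coeff]
  refine (norm_sub_le _ _).trans ?_
  have h1 : ‖w * qc P r w + (if r = 0 then 0 else qc P (r - 1) w)‖ ≤
      2 * ∑ i ∈ Finset.range (P.natDegree + 1), ‖P.coeff i‖ := by
    refine (norm_add_le _ _).trans ?_
    have a1 : ‖w * qc P r w‖ ≤ ∑ i ∈ Finset.range (P.natDegree + 1), ‖P.coeff i‖ := by
      rw [norm_mul, hw, one_mul]; exact qc_norm_le P r w hw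
    have a2 : ‖(if r = 0 then (0:ℂ) else qc P (r - 1) w)‖ ≤
        ∑ i ∈ Finset.range (P.natDegree + 1), ‖P.coeff i‖ := by
      split_ifs
      · simpa using Finset.sum_nonneg fun i _ => norm_nonneg (P.coeff i)
      · exact qc_norm_le P _ w hw
    linarith
  linarith

lemma eval_norm_le (P : Polynomial ℂ) (w : ℂ) (hw : ‖w‖ = 1) :
    ‖P.eval w‖ ≤ ∑ i ∈ Finset.range (P.natDegree + 1), ‖P.coeff i‖ := by
  rw [Polynomial.eval_eq_sum_range]
  refine (norm_sum_le _ _).trans (Finset.sum_le_sum fun i _ => ?_)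
  rw [norm_mul, norm_pow, hw, one_pow, mul_one]

lemma pointwise_id (P : Polynomial ℂ) (z w : ℂ) (hw : w - z ≠ 0) (Wc : ℂ) :
    2 * P.eval z * ((w / (w - z)) * ((‖P.eval w‖ : ℂ) / P.eval w) * Wc) =
      ((w + z) / (w - z)) * (‖P.eval w‖ : ℂ) * Wc +
        ((‖P.eval w‖ : ℂ) / P.eval w * Wc) * (Dp P w).eval z := by
  by_cases hu : P.eval w = 0
  · simp [hu]
  · have key : (w - z) * (Qp P w).eval z = P.eval w - P.eval z := by
      linear_combination -Qp_key P z w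
    simp only [Dp, Polynomial.eval_sub, Polynomial.eval_mul, Polynomial.eval_add,
      Polynomial.eval_C, Polynomial.eval_X]
    field_simp
    ring_nf
    linear_combination ((‖P.eval w‖ : ℂ) * Wc * (w + z)) * key

end CTDAux

set_option maxHeartbeats 1000000 in
/-- the key construction in the proof of Theorem 1.2. With
`p(z) = ∏ (z-ξ_k)^{m_k}` (roots on `𝕋`) and integrable `W ≥ 0`, the integrals defining
`F(z) = 2p(z)∫ (e^{it}/(e^{it}-z))·(|p(e^{it})|/p(e^{it}))·W(t) dt/2π` and
`F₀(z) = ∫ ((e^{it}+z)/(e^{it}-z))·|p(e^{it})|·W(t) dt/2π` converge for every `z ∈ 𝔻`,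
and `F = F₀ + q` on `𝔻` for some polynomial `q`. -/
theorem cauchy_transform_decomposition (n : ℕ) (ξ : Fin n → ℂ) (hξ : ∀ k, ‖ξ k‖ = 1)
    (hinj : Function.Injective ξ) (m : Fin n → ℕ) (hm : ∀ k, 0 < m k)
    (p : ℂ → ℂ) (hp : ∀ z, p z = ∏ k, (z - ξ k) ^ m k)
    (W : ℝ → ℝ) (hW : ∀ t, 0 ≤ W t) (hWint : IntervalIntegrable W volume (-π) π) :
    (∀ z ∈ unitDisk,
      IntervalIntegrable
        (fun t => (circ t / (circ t - z)) * ((‖p (circ t)‖ : ℂ) / p (circ t)) * (W t : ℂ))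
        volume (-π) π ∧
      IntervalIntegrable
        (fun t => ((circ t + z) / (circ t - z)) * (‖p (circ t)‖ : ℂ) * (W t : ℂ))
        volume (-π) π) ∧
    ∃ q : Polynomial ℂ, ∀ z ∈ unitDisk,
      2 * p z *
          ((∫ t in (-π)..π,
              (circ t / (circ t - z)) * ((‖p (circ t)‖ : ℂ) / p (circ t)) * (W t : ℂ)) /
            (2 * (π : ℂ))) =
        (∫ t in (-π)..π,
            ((circ t + z) / (circ t - z)) * (‖p (circ t)‖ : ℂ) * (W t : ℂ)) /
            (2 * (π : ℂ)) +
          q.eval z := by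
  have hπ : (0:ℝ) < π := Real.pi_pos
  have hπC : (2 * (π:ℂ)) ≠ 0 := by
    simp [Complex.ofReal_ne_zero, ne_of_gt hπ]
  obtain ⟨P, hPe⟩ : ∃ P : Polynomial ℂ, ∀ z, P.eval z = p z := by
    refine ⟨∏ k, (Polynomial.X - Polynomial.C (ξ k)) ^ m k, fun z => ?_⟩
    rw [hp z]
    simp [Polynomial.eval_prod]
  set M : ℕ := P.natDegree + 1 with hM
  set K : ℝ := ∑ i ∈ Finset.range M, ‖P.coeff i‖ with hKdef
  have hK : 0 ≤ K := Finset.sum_nonneg fun i _ => norm_nonneg _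
  have hcirc_cont : Continuous circ :=
    Complex.continuous_exp.comp (Complex.continuous_ofReal.mul continuous_const)
  have hcirc : ∀ t : ℝ, ‖circ t‖ = 1 := by
    intro t
    simp [circ, Complex.norm_exp]
  have hp_cont : Continuous p := by
    have h : p = fun z => P.eval z := funext fun z => (hPe z).symm
    rw [h]
    exact P.continuous
  have hpc : Continuous fun t => p (circ t) := hp_cont.comp hcirc_cont
  have hg_meas : AEStronglyMeasurable (fun t => (‖p (circ t)‖ : ℂ) / p (circ t))
      (volume.restrict (Set.uIoc (-π) π)) := by
    apply Measurable.aestronglyMeasurable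
    exact (Complex.measurable_ofReal.comp hpc.norm.measurable).div hpc.measurable
  have hg_norm : ∀ t, ‖(‖p (circ t)‖ : ℂ) / p (circ t)‖ ≤ 1 := by
    intro t
    rw [norm_div, Complex.norm_real, norm_norm]
    exact div_le_one_of_le₀ le_rfl (norm_nonneg _)
  have hW_meas : AEStronglyMeasurable (fun t => (W t : ℂ)) (volume.restrict (Set.uIoc (-π) π)) :=
    Complex.continuous_ofReal.comp_aestronglyMeasurable
      (intervalIntegrable_iff.mp hWint).aestronglyMeasurable
  have hWnorm : ∀ t, ‖(W t : ℂ)‖ = W t := fun t => by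
    rw [Complex.norm_real, Real.norm_eq_abs, abs_of_nonneg (hW t)]
  have key_int : ∀ (f : ℝ → ℂ) (C : ℝ),
      AEStronglyMeasurable f (volume.restrict (Set.uIoc (-π) π)) →
      (∀ t, ‖f t‖ ≤ C * W t) → IntervalIntegrable f volume (-π) π := by
    intro f C hmeas hb
    refine (hWint.const_mul C).mono_fun hmeas (Filter.Eventually.of_forall fun t => ?_)
    exact (hb t).trans (le_abs_self _)
  have disk_facts : ∀ z ∈ unitDisk, ∀ t : ℝ, circ t - z ≠ 0 ∧ 1 - ‖z‖ ≤ ‖circ t - z‖ := by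
    intro z hz t
    have hz1 : ‖z‖ < 1 := by simpa [unitDisk, Metric.mem_ball] using hz
    have h2 : 1 - ‖z‖ ≤ ‖circ t - z‖ := by
      have h3 := norm_sub_norm_le (circ t) z
      rw [hcirc t] at h3; linarith
    refine ⟨fun h => ?_, h2⟩
    rw [h, norm_zero] at h2; linarith
  have hpK : ∀ t, ‖p (circ t)‖ ≤ K := by
    intro t
    rw [← hPe]
    exact eval_norm_le P (circ t) (hcirc t)
  have int1 : ∀ z ∈ unitDisk, IntervalIntegrable
      (fun t => (circ t / (circ t - z)) * ((‖p (circ t)‖ : ℂ) / p (circ t)) * (W t : ℂ))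
      volume (-π) π := by
    intro z hz
    have hz1 : ‖z‖ < 1 := by simpa [unitDisk, Metric.mem_ball] using hz
    have hd : 0 < 1 - ‖z‖ := by linarith
    apply key_int _ (1 / (1 - ‖z‖))
    · refine AEStronglyMeasurable.mul (AEStronglyMeasurable.mul ?_ hg_meas) hW_meas
      exact (hcirc_cont.div (hcirc_cont.sub continuous_const)
        (fun t => (disk_facts z hz t).1)).aestronglyMeasurable
    · intro t
      obtain ⟨hne, hge⟩ := disk_facts z hz t
      rw [norm_mul, norm_mul, hWnorm]
      have h1 : ‖circ t / (circ t - z)‖ ≤ 1 / (1 - ‖z‖) := by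
        rw [norm_div, hcirc t]
        exact one_div_le_one_div_of_le hd hge
      calc ‖circ t / (circ t - z)‖ * ‖(‖p (circ t)‖ : ℂ) / p (circ t)‖ * W t
          ≤ (1 / (1 - ‖z‖)) * 1 * W t :=
            mul_le_mul (mul_le_mul h1 (hg_norm t) (norm_nonneg _)
                (div_nonneg zero_le_one hd.le))
              le_rfl (hW t) (mul_nonneg (div_nonneg zero_le_one hd.le) zero_le_one)
        _ = 1 / (1 - ‖z‖) * W t := by ring
  have int2 : ∀ z ∈ unitDisk, IntervalIntegrable
      (fun t => ((circ t + z) / (circ t - z)) * (‖p (circ t)‖ : ℂ) * (W t : ℂ))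
      volume (-π) π := by
    intro z hz
    have hz1 : ‖z‖ < 1 := by simpa [unitDisk, Metric.mem_ball] using hz
    have hd : 0 < 1 - ‖z‖ := by linarith
    apply key_int _ (2 / (1 - ‖z‖) * K)
    · refine AEStronglyMeasurable.mul (AEStronglyMeasurable.mul ?_ ?_) hW_meas
      · exact ((hcirc_cont.add continuous_const).div (hcirc_cont.sub continuous_const)
          (fun t => (disk_facts z hz t).1)).aestronglyMeasurable
      · exact (Complex.continuous_ofReal.comp hpc.norm).aestronglyMeasurable
    · intro t
      obtain ⟨hne, hge⟩ := disk_facts z hz t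
      rw [norm_mul, norm_mul, hWnorm]
      have h1 : ‖(circ t + z) / (circ t - z)‖ ≤ 2 / (1 - ‖z‖) := by
        rw [norm_div]
        have hnum : ‖circ t + z‖ ≤ 2 := by
          have := norm_add_le (circ t) z
          rw [hcirc t] at this; linarith
        exact div_le_div₀ (by norm_num) hnum hd hge
      have h2 : ‖((‖p (circ t)‖ : ℂ))‖ ≤ K := by
        rw [Complex.norm_real, norm_norm]; exact hpK t
      calc ‖(circ t + z) / (circ t - z)‖ * ‖((‖p (circ t)‖ : ℂ))‖ * W t
          ≤ (2 / (1 - ‖z‖)) * K * W t :=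
            mul_le_mul (mul_le_mul h1 h2 (norm_nonneg _)
                (div_nonneg (by norm_num) hd.le))
              le_rfl (hW t) (mul_nonneg (div_nonneg (by norm_num) hd.le) hK)
        _ = 2 / (1 - ‖z‖) * K * W t := by ring
  refine ⟨fun z hz => ⟨int1 z hz, int2 z hz⟩, ?_⟩
  -- coefficient integrands
  set F : ℕ → ℝ → ℂ :=
    fun r t => ((‖p (circ t)‖ : ℂ) / p (circ t) * (W t : ℂ)) * (Dp P (circ t)).coeff r with hFdef
  have hqc_cont : ∀ r, Continuous fun t => qc P r (circ t) := by
    intro r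
    unfold qc
    apply continuous_finset_sum
    intro i _
    apply continuous_const.mul
    split_ifs
    · exact hcirc_cont.pow _
    · exact continuous_const
  have hDc_cont : ∀ r, Continuous fun t => (Dp P (circ t)).coeff r := by
    intro r
    simp only [Dp_coeff]
    refine Continuous.sub continuous_const (Continuous.add (hcirc_cont.mul (hqc_cont r)) ?_)
    split_ifs
    · exact continuous_const
    · exact hqc_cont (r - 1)
  have hF_int : ∀ r, IntervalIntegrable (F r) volume (-π) π := by
    intro r
    apply key_int _ (‖P.coeff r‖ + 2 * K)
    · exact (hg_meas.mul hW_meas).mul (hDc_cont r).aestronglyMeasurable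
    · intro t
      rw [hFdef]
      simp only [norm_mul]
      rw [hWnorm]
      have hcb : ‖(Dp P (circ t)).coeff r‖ ≤ ‖P.coeff r‖ + 2 * K :=
        Dp_coeff_norm_le P r (circ t) (hcirc t)
      calc ‖(‖p (circ t)‖ : ℂ) / p (circ t)‖ * W t * ‖(Dp P (circ t)).coeff r‖
          ≤ 1 * W t * (‖P.coeff r‖ + 2 * K) := by
            apply mul_le_mul (mul_le_mul (hg_norm t) le_rfl (hW t) zero_le_one) hcb
              (norm_nonneg _) (mul_nonneg zero_le_one (hW t))
        _ = (‖P.coeff r‖ + 2 * K) * W t := by ring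
  refine ⟨∑ r ∈ Finset.range (M + 1),
      Polynomial.C ((∫ t in (-π)..π, F r t) / (2 * (π:ℂ))) * Polynomial.X ^ r, ?_⟩
  intro z hz
  have hpoint : ∀ t : ℝ,
      2 * p z * ((circ t / (circ t - z)) * ((‖p (circ t)‖ : ℂ) / p (circ t)) * (W t : ℂ))
        = ((circ t + z) / (circ t - z)) * (‖p (circ t)‖ : ℂ) * (W t : ℂ)
          + ∑ r ∈ Finset.range (M + 1), F r t * z ^ r := by
    intro t
    have h1 := pointwise_id P z (circ t) (disk_facts z hz t).1 ((W t : ℂ))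
    simp only [hPe] at h1
    have hdeg : (Dp P (circ t)).natDegree < M + 1 := by
      have := Dp_natDegree_lt P (circ t); omega
    have h2 : (Dp P (circ t)).eval z
        = ∑ r ∈ Finset.range (M + 1), (Dp P (circ t)).coeff r * z ^ r :=
      Polynomial.eval_eq_sum_range' hdeg z
    rw [h2, Finset.mul_sum] at h1
    rw [h1]
    congr 1
    refine Finset.sum_congr rfl fun r _ => ?_
    rw [hFdef]
    ring
  have hFz_int : ∀ r ∈ Finset.range (M + 1),
      IntervalIntegrable (fun t => F r t * z ^ r) volume (-π) π :=
    fun r _ => (hF_int r).mul_const _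
  have hSum_int : IntervalIntegrable (fun t => ∑ r ∈ Finset.range (M + 1), F r t * z ^ r)
      volume (-π) π := by
    have h := IntervalIntegrable.sum (μ := volume) (a := -π) (b := π)
      (f := fun r t => F r t * z ^ r) (Finset.range (M + 1)) hFz_int
    have he : (fun t => ∑ r ∈ Finset.range (M + 1), F r t * z ^ r)
        = ∑ r ∈ Finset.range (M + 1), (fun t => F r t * z ^ r) := by
      ext t; simp
    rw [he]; exact h
  have hI : 2 * p z * ∫ t in (-π)..π,
        (circ t / (circ t - z)) * ((‖p (circ t)‖ : ℂ) / p (circ t)) * (W t : ℂ)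
      = (∫ t in (-π)..π, ((circ t + z) / (circ t - z)) * (‖p (circ t)‖ : ℂ) * (W t : ℂ))
        + ∑ r ∈ Finset.range (M + 1), (∫ t in (-π)..π, F r t) * z ^ r := by
    rw [← intervalIntegral.integral_const_mul]
    rw [intervalIntegral.integral_congr (fun t _ => hpoint t)]
    rw [intervalIntegral.integral_add (int2 z hz) hSum_int]
    congr 1
    rw [intervalIntegral.integral_finset_sum hFz_int]
    exact Finset.sum_congr rfl fun r _ => intervalIntegral.integral_mul_const _ _
  have heval : Polynomial.eval z (∑ r ∈ Finset.range (M + 1),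
        Polynomial.C ((∫ t in (-π)..π, F r t) / (2 * (π:ℂ))) * Polynomial.X ^ r)
      = (∑ r ∈ Finset.range (M + 1), (∫ t in (-π)..π, F r t) * z ^ r) / (2 * (π:ℂ)) := by
    rw [Polynomial.eval_finset_sum, Finset.sum_div]
    refine Finset.sum_congr rfl fun r _ => ?_
    simp [div_mul_eq_mul_div]
  rw [heval, mul_div_assoc' (2 * p z), hI, add_div]
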